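/- For every α > 1/3 and every C > 0, there exists a probability measure μ on ℝ with mean 0, variance 1, and finite fourth moment such that L(μ, b) > C·(m_4(μ) - 1)^α, where b = (1/2)δ_{-1} + (1/2)δ_1 and L is the Lévy distance. -/

import Mathlib

open MeasureTheory ProbabilityTheory Set
open scoped ENNReal

/-- The Lévy distance between two probability measures on ℝ, defined via their
cumulative distribution functions. -/
noncomputable def levyDist (μ ν : Measure ℝ) : ℝ :=
  sInf {ε : ℝ | 0 < ε ∧ ∀ x : ℝ,
    cdf μ (x - ε) - ε ≤ cdf ν x ∧ cdf ν x ≤ cdf μ (x + ε) + ε}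

/-- The symmetric Bernoulli distribution `b = (1/2)δ₋₁ + (1/2)δ₁`. -/
noncomputable def bern : Measure ℝ :=
  (2 : ℝ≥0∞)⁻¹ • Measure.dirac (-1) + (2 : ℝ≥0∞)⁻¹ • Measure.dirac 1

lemma crs_integrable_dirac (f : ℝ → ℝ) (x : ℝ) : Integrable f (Measure.dirac x) :=
  (integrable_congr (MeasureTheory.ae_eq_dirac f)).mpr (integrable_const _)

lemma crs_integrable_pair (f : ℝ → ℝ) (c : ℝ) (x y : ℝ) :
    Integrable f (ENNReal.ofReal c • (Measure.dirac x + Measure.dirac y)) :=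
  (((crs_integrable_dirac f x).add_measure (crs_integrable_dirac f y)).smul_measure
    ENNReal.ofReal_ne_top)

lemma crs_integral_pair (f : ℝ → ℝ) (c : ℝ) (hc : 0 ≤ c) (x y : ℝ) :
    ∫ t, f t ∂(ENNReal.ofReal c • (Measure.dirac x + Measure.dirac y))
      = c * (f x + f y) := by
  rw [integral_smul_measure,
    integral_add_measure (crs_integrable_dirac f x) (crs_integrable_dirac f y),
    integral_dirac, integral_dirac, ENNReal.toReal_ofReal hc, smul_eq_mul]

noncomputable def crsB (δ : ℝ) : ℝ := Real.sqrt ((1 - δ*(1-δ)^2)/(1-δ))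

noncomputable def crsMu (δ : ℝ) : Measure ℝ :=
  ENNReal.ofReal (δ/2) • (Measure.dirac (-(1-δ)) + Measure.dirac (1-δ)) +
  ENNReal.ofReal ((1-δ)/2) • (Measure.dirac (-(crsB δ)) + Measure.dirac (crsB δ))

lemma crsB_sq {δ : ℝ} (h0 : 0 < δ) (h1 : δ < 1) :
    (crsB δ)^2 = (1 - δ*(1-δ)^2)/(1-δ) := by
  apply Real.sq_sqrt
  apply div_nonneg (by nlinarith) (by linarith)

lemma crsB_gt_one {δ : ℝ} (h0 : 0 < δ) (h1 : δ < 1) : 1 < crsB δ := by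
  rw [show (1:ℝ) = Real.sqrt 1 by simp [Real.sqrt_one]]
  apply Real.sqrt_lt_sqrt (by norm_num)
  rw [lt_div_iff₀ (by linarith)]
  nlinarith [mul_pos (mul_pos h0 h0) (show (0:ℝ) < 2-δ by linarith)]

lemma crsMu_integral (δ : ℝ) (h0 : 0 < δ) (h1 : δ < 1) (f : ℝ → ℝ) :
    ∫ t, f t ∂(crsMu δ) = (δ/2) * (f (-(1-δ)) + f (1-δ))
      + ((1-δ)/2) * (f (-(crsB δ)) + f (crsB δ)) := by
  rw [crsMu, integral_add_measure (crs_integrable_pair f _ _ _) (crs_integrable_pair f _ _ _),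
    crs_integral_pair f _ (by linarith) _ _, crs_integral_pair f _ (by linarith) _ _]

theorem crsMu_prob (δ : ℝ) (h0 : 0 < δ) (h1 : δ < 1) : IsProbabilityMeasure (crsMu δ) := by
  constructor
  simp only [crsMu, Measure.add_apply, Measure.smul_apply, Measure.dirac_apply_of_mem (mem_univ _),
    smul_eq_mul, mul_one]
  rw [show ((1:ℝ≥0∞)+1) = ENNReal.ofReal 2 by norm_num,
    ← ENNReal.ofReal_mul (by linarith), ← ENNReal.ofReal_mul (by linarith),
    ← ENNReal.ofReal_add (by linarith) (by linarith)]
  norm_num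

lemma crsMu_mean {δ : ℝ} (h0 : 0 < δ) (h1 : δ < 1) : ∫ x, x ∂(crsMu δ) = 0 := by
  rw [crsMu_integral δ h0 h1 (fun x => x)]; ring

lemma crsMu_var {δ : ℝ} (h0 : 0 < δ) (h1 : δ < 1) : ∫ x, x^2 ∂(crsMu δ) = 1 := by
  rw [crsMu_integral δ h0 h1 (fun x => x^2)]
  have hb := crsB_sq h0 h1
  have hne : (1:ℝ) - δ ≠ 0 := by linarith
  rw [show ((-crsB δ):ℝ)^2 = crsB δ ^2 by ring, hb,
    show ((-(1-δ)):ℝ)^2 = (1-δ)^2 by ring]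
  field_simp
  ring

lemma crsMu_m4 {δ : ℝ} (h0 : 0 < δ) (h1 : δ < 1) :
    (∫ x, x^4 ∂(crsMu δ)) - 1 = δ^3*(2-δ)^2/(1-δ) := by
  rw [crsMu_integral δ h0 h1 (fun x => x^4)]
  have hb := crsB_sq h0 h1
  have hne : (1:ℝ) - δ ≠ 0 := by linarith
  rw [show ((-crsB δ):ℝ)^4 = ((crsB δ)^2)^2 by ring,
    show ((crsB δ):ℝ)^4 = ((crsB δ)^2)^2 by ring, hb,
    show ((-(1-δ)):ℝ)^4 = (1-δ)^4 by ring]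
  field_simp
  ring

lemma crsMu_memLp {δ : ℝ} (h0 : 0 < δ) (h1 : δ < 1) : MemLp (fun x => x) 4 (crsMu δ) := by
  have := crsMu_prob δ h0 h1
  have hb1 := crsB_gt_one h0 h1
  apply MemLp.of_bound measurable_id.aestronglyMeasurable (crsB δ)
  rw [ae_iff]
  simp only [crsMu, Measure.add_apply, Measure.smul_apply, Measure.dirac_apply]
  rw [Set.indicator_of_notMem, Set.indicator_of_notMem,
    Set.indicator_of_notMem, Set.indicator_of_notMem]
  · simp
  all_goals
    simp only [mem_setOf_eq, not_not, Real.norm_eq_abs, id_eq]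
    rw [abs_le]
    constructor <;> linarith

instance bern_prob : IsProbabilityMeasure bern := by
  constructor
  simp only [bern, Measure.add_apply, Measure.smul_apply,
    Measure.dirac_apply_of_mem (mem_univ _), smul_eq_mul, mul_one]
  rw [ENNReal.inv_two_add_inv_two]

lemma bern_cdf {t : ℝ} (ht1 : -1 ≤ t) (ht2 : t < 1) : cdf bern t = 1/2 := by
  rw [cdf_eq_real, measureReal_def]
  simp only [bern, Measure.add_apply, Measure.smul_apply, Measure.dirac_apply]
  rw [Set.indicator_of_mem (by simpa [mem_Iic] using ht1),
    Set.indicator_of_notMem (by simp [mem_Iic]; linarith)]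
  simp

lemma crsMu_cdf {δ t : ℝ} (h0 : 0 < δ) (h1 : δ < 1) (ht1 : 1 - δ ≤ t) (ht2 : t < crsB δ) :
    cdf (crsMu δ) t = 1/2 + δ/2 := by
  have := crsMu_prob δ h0 h1
  rw [cdf_eq_real, measureReal_def]
  simp only [crsMu, Measure.add_apply, Measure.smul_apply, Measure.dirac_apply]
  rw [Set.indicator_of_mem (by simp [mem_Iic]; linarith),
    Set.indicator_of_mem (by simpa [mem_Iic] using ht1),
    Set.indicator_of_mem (by simp [mem_Iic]; nlinarith [crsB_gt_one h0 h1]),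
    Set.indicator_of_notMem (by simp [mem_Iic]; linarith)]
  simp only [Pi.one_apply, smul_eq_mul, mul_one, mul_zero, add_zero, mul_add]
  rw [← ENNReal.ofReal_add (by linarith) (by linarith), ← ENNReal.ofReal_add (by linarith) (by linarith)]
  rw [ENNReal.toReal_ofReal (by linarith)]
  ring

lemma crs_levy_ge {δ : ℝ} (h0 : 0 < δ) (h12 : δ ≤ 1/2) : δ/2 ≤ levyDist (crsMu δ) bern := by
  have h1 : δ < 1 := by linarith
  apply le_csInf
  · refine ⟨2, by norm_num, fun x => ⟨?_, ?_⟩⟩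
    · linarith [cdf_le_one (crsMu δ) (x-2), cdf_nonneg bern x]
    · linarith [cdf_le_one bern x, cdf_nonneg (crsMu δ) (x+2)]
  · rintro ε ⟨hε, hcond⟩
    by_contra hlt
    push_neg at hlt
    have h := (hcond (1-ε)).1
    rw [show (1-ε-ε : ℝ) = 1-2*ε by ring] at h
    rw [crsMu_cdf h0 h1 (by linarith) (by nlinarith [crsB_gt_one h0 h1])] at h
    rw [bern_cdf (by linarith) (by linarith)] at h
    linarith

theorem cube_root_exponent_sharp (α C : ℝ) (hα : 1 / 3 < α) (hC : 0 < C) :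
    ∃ μ : Measure ℝ, IsProbabilityMeasure μ ∧
      MemLp (fun x => x) 4 μ ∧
      (∫ x, x ∂μ) = 0 ∧ (∫ x, x ^ 2 ∂μ) = 1 ∧
      levyDist μ bern > C * ((∫ x, x ^ 4 ∂μ) - 1) ^ α := by
  have hP : (0:ℝ) < C * (8:ℝ) ^ α := by positivity
  set K : ℝ := max (2 * (C * (8:ℝ) ^ α)) 1 with hK
  have hK1 : (1:ℝ) ≤ K := le_max_right _ _
  have hKpos : (0:ℝ) < K := by linarith
  have hKinv1 : K⁻¹ ≤ 1 := by
    rw [inv_le_one_iff₀]; right; exact hK1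
  have hKinv0 : (0:ℝ) < K⁻¹ := by positivity
  set δ₀ : ℝ := K⁻¹ ^ (3*α - 1)⁻¹ with hδ₀
  have hexp : (0:ℝ) < 3*α - 1 := by linarith
  have hδ₀pos : 0 < δ₀ := Real.rpow_pos_of_pos hKinv0 _
  have hδ₀le1 : δ₀ ≤ 1 := Real.rpow_le_one hKinv0.le hKinv1 (by positivity)
  set δ : ℝ := δ₀ / 2 with hδ
  have h0 : 0 < δ := by positivity
  have h12 : δ ≤ 1/2 := by rw [hδ]; linarith
  have h1 : δ < 1 := by linarith
  refine ⟨crsMu δ, crsMu_prob δ h0 h1, crsMu_memLp h0 h1, crsMu_mean h0 h1, crsMu_var h0 h1, ?_⟩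
  -- moment bound
  have hM : (∫ x, x ^ 4 ∂(crsMu δ)) - 1 = δ^3*(2-δ)^2/(1-δ) := crsMu_m4 h0 h1
  have hMpos : (0:ℝ) < δ^3*(2-δ)^2/(1-δ) := by
    apply div_pos (by nlinarith [pow_pos h0 3]) (by linarith)
  have hMle : δ^3*(2-δ)^2/(1-δ) ≤ 8 * δ^3 := by
    rw [div_le_iff₀ (by linarith)]
    nlinarith [pow_pos h0 3]
  -- rpow bound
  have hrpow : δ ^ (3*α - 1) < K⁻¹ := by
    have h2 : δ < δ₀ := by rw [hδ]; linarith
    calc δ ^ (3*α - 1) < δ₀ ^ (3*α - 1) := Real.rpow_lt_rpow h0.le h2 hexp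
    _ = K⁻¹ := Real.rpow_inv_rpow hKinv0.le (by linarith)
  have hKinvle : K⁻¹ ≤ (2 * (C * (8:ℝ) ^ α))⁻¹ := by
    apply inv_anti₀ (by linarith) (le_max_left _ _)
  have key : C * (8 * δ^3) ^ α < δ / 2 := by
    have e1 : (8 * δ^3 : ℝ) ^ α = (8:ℝ)^α * δ ^ (3*α) := by
      rw [Real.mul_rpow (by norm_num) (by positivity)]
      congr 1
      rw [← Real.rpow_natCast δ 3, ← Real.rpow_mul h0.le]
      norm_num
    have e2 : δ ^ (3*α - 1) * δ = δ ^ (3*α) := by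
      nth_rewrite 2 [← Real.rpow_one δ]
      rw [← Real.rpow_add h0]
      norm_num
    have hX : C * (8:ℝ)^α * δ ^ (3*α-1) < 1/2 := by
      calc C * (8:ℝ)^α * δ ^ (3*α-1) < C * (8:ℝ)^α * (2 * (C * (8:ℝ)^α))⁻¹ :=
            mul_lt_mul_of_pos_left (lt_of_lt_of_le hrpow hKinvle) hP
      _ = 1/2 := by field_simp
    rw [e1, ← e2]
    calc C * ((8:ℝ)^α * (δ ^ (3*α-1) * δ)) = (C * (8:ℝ)^α * δ ^ (3*α-1)) * δ := by ring
    _ < (1/2) * δ := mul_lt_mul_of_pos_right hX h0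
    _ = δ / 2 := by ring
  have hle : C * ((∫ x, x ^ 4 ∂(crsMu δ)) - 1) ^ α ≤ C * (8 * δ^3) ^ α := by
    apply mul_le_mul_of_nonneg_left _ hC.le
    apply Real.rpow_le_rpow (by rw [hM]; exact hMpos.le) (by rw [hM]; linarith) (by linarith)
  calc C * ((∫ x, x ^ 4 ∂(crsMu δ)) - 1) ^ α ≤ C * (8 * δ^3) ^ α := hle
  _ < δ / 2 := key
  _ ≤ levyDist (crsMu δ) bern := crs_levy_ge h0 h12
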